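/- Let 𝒴 ⊂ ℝ be a finite set, let 𝒜, 𝒢₁, 𝒢₂, ℬ₂ be finite types, let p be a strictly positive probability mass function on 𝒴 × 𝒜 × 𝒢₁ × 𝒢₂ × ℬ₂, and fix a ∈ 𝒜. If G₂ ⊥ (A, G₁) | B₂ under p, then the influence function for the larger adjustment set is orthogonal to the difference: ∑_{(y,a′,g₁,g₂,b₂)} p(y,a′,g₁,g₂,b₂) · ψ_a^{G₁,(G₂,B₂)}(y,a′,g₁,g₂,b₂) · ( ψ_a^{G₁,B₂}(y,a′,g₁,b₂) − ψ_a^{G₁,(G₂,B₂)}(y,a′,g₁,g₂,b₂) ) = 0. -/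

import Mathlib

open Finset

noncomputable section

variable {Y : Finset ℝ} {A G₁ G₂ B₂ : Type}
variable [Fintype A] [Fintype G₁] [Fintype G₂] [Fintype B₂] [DecidableEq A]

/-- Marginal `p(g₁)`. -/
def pG1 (p : Y × A × G₁ × G₂ × B₂ → ℝ) (g₁ : G₁) : ℝ :=
  ∑ y : Y, ∑ a : A, ∑ g₂ : G₂, ∑ b₂ : B₂, p (y, a, g₁, g₂, b₂)

/-- Marginal `p(g₂)`. -/
def pG2 (p : Y × A × G₁ × G₂ × B₂ → ℝ) (g₂ : G₂) : ℝ :=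
  ∑ y : Y, ∑ a : A, ∑ g₁ : G₁, ∑ b₂ : B₂, p (y, a, g₁, g₂, b₂)

/-- Marginal `p(b₂)`. -/
def pB2 (p : Y × A × G₁ × G₂ × B₂ → ℝ) (b₂ : B₂) : ℝ :=
  ∑ y : Y, ∑ a : A, ∑ g₁ : G₁, ∑ g₂ : G₂, p (y, a, g₁, g₂, b₂)

/-- Marginal `p(g₂, b₂)`. -/
def pG2B2 (p : Y × A × G₁ × G₂ × B₂ → ℝ) (g₂ : G₂) (b₂ : B₂) : ℝ :=
  ∑ y : Y, ∑ a : A, ∑ g₁ : G₁, p (y, a, g₁, g₂, b₂)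

/-- Marginal `p(a, g₁, b₂)`. -/
def pAG1B2 (p : Y × A × G₁ × G₂ × B₂ → ℝ) (a : A) (g₁ : G₁) (b₂ : B₂) : ℝ :=
  ∑ y : Y, ∑ g₂ : G₂, p (y, a, g₁, g₂, b₂)

/-- Marginal `p(a, g₁, g₂, b₂)`. -/
def pAG1G2B2 (p : Y × A × G₁ × G₂ × B₂ → ℝ) (a : A) (g₁ : G₁) (g₂ : G₂) (b₂ : B₂) : ℝ :=
  ∑ y : Y, p (y, a, g₁, g₂, b₂)

/-- Marginal `p(a, g₁, g₂)`. -/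
def pAG1G2 (p : Y × A × G₁ × G₂ × B₂ → ℝ) (a : A) (g₁ : G₁) (g₂ : G₂) : ℝ :=
  ∑ y : Y, ∑ b₂ : B₂, p (y, a, g₁, g₂, b₂)

/-- Outcome regression `m₁(g₁,b₂) = ∑_y y·p(y | a, g₁, b₂)` for the
adjustment set `(G₁, B₂)`. -/
def m1 (p : Y × A × G₁ × G₂ × B₂ → ℝ) (a : A) (g₁ : G₁) (b₂ : B₂) : ℝ :=
  ∑ y : Y, (y : ℝ) * ((∑ g₂ : G₂, p (y, a, g₁, g₂, b₂)) / pAG1B2 p a g₁ b₂)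

/-- Outcome regression `m₂(g₁,g₂,b₂) = ∑_y y·p(y | a, g₁, g₂, b₂)` for the
adjustment set `(G₁, (G₂, B₂))`. -/
def m2 (p : Y × A × G₁ × G₂ × B₂ → ℝ) (a : A) (g₁ : G₁) (g₂ : G₂) (b₂ : B₂) : ℝ :=
  ∑ y : Y, (y : ℝ) * (p (y, a, g₁, g₂, b₂) / pAG1G2B2 p a g₁ g₂ b₂)

/-- Outcome regression `m₃(g₁,g₂) = ∑_y y·p(y | a, g₁, g₂)` for the
adjustment set `(G₁, G₂)`. -/
def m3 (p : Y × A × G₁ × G₂ × B₂ → ℝ) (a : A) (g₁ : G₁) (g₂ : G₂) : ℝ :=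
  ∑ y : Y, (y : ℝ) * ((∑ b₂ : B₂, p (y, a, g₁, g₂, b₂)) / pAG1G2 p a g₁ g₂)

/-- Target parameter for the adjustment set `(G₁, B₂)`. -/
def T1 (p : Y × A × G₁ × G₂ × B₂ → ℝ) (a : A) : ℝ :=
  ∑ g₁ : G₁, pG1 p g₁ * ∑ b₂ : B₂, pB2 p b₂ * m1 p a g₁ b₂

/-- Target parameter for the adjustment set `(G₁, (G₂, B₂))`. -/
def T2 (p : Y × A × G₁ × G₂ × B₂ → ℝ) (a : A) : ℝ :=
  ∑ g₁ : G₁, pG1 p g₁ * ∑ g₂ : G₂, ∑ b₂ : B₂, pG2B2 p g₂ b₂ * m2 p a g₁ g₂ b₂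

/-- Target parameter for the adjustment set `(G₁, G₂)`. -/
def T3 (p : Y × A × G₁ × G₂ × B₂ → ℝ) (a : A) : ℝ :=
  ∑ g₁ : G₁, pG1 p g₁ * ∑ g₂ : G₂, pG2 p g₂ * m3 p a g₁ g₂

/-- Influence function `ψ_a^{G₁,B₂}` for the adjustment set `(G₁, B₂)`. -/
def psi1 (p : Y × A × G₁ × G₂ × B₂ → ℝ) (a : A)
    (y : Y) (a' : A) (g₁ : G₁) (b₂ : B₂) : ℝ :=
  (if a' = a then (1 : ℝ) else 0) * (pG1 p g₁ * pB2 p b₂ / pAG1B2 p a g₁ b₂) *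
      ((y : ℝ) - m1 p a g₁ b₂)
    + (∑ b₂' : B₂, pB2 p b₂' * m1 p a g₁ b₂')
    + (∑ g₁' : G₁, pG1 p g₁' * m1 p a g₁' b₂)
    - 2 * T1 p a

/-- Influence function `ψ_a^{G₁,(G₂,B₂)}` for the adjustment set `(G₁, (G₂, B₂))`. -/
def psi2 (p : Y × A × G₁ × G₂ × B₂ → ℝ) (a : A)
    (y : Y) (a' : A) (g₁ : G₁) (g₂ : G₂) (b₂ : B₂) : ℝ :=
  (if a' = a then (1 : ℝ) else 0) *
      (pG1 p g₁ * pG2B2 p g₂ b₂ / pAG1G2B2 p a g₁ g₂ b₂) *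
      ((y : ℝ) - m2 p a g₁ g₂ b₂)
    + (∑ g₂' : G₂, ∑ b₂' : B₂, pG2B2 p g₂' b₂' * m2 p a g₁ g₂' b₂')
    + (∑ g₁' : G₁, pG1 p g₁' * m2 p a g₁' g₂ b₂)
    - 2 * T2 p a

/-- Influence function `ψ_a^{G₁,G₂}` for the adjustment set `(G₁, G₂)`. -/
def psi3 (p : Y × A × G₁ × G₂ × B₂ → ℝ) (a : A)
    (y : Y) (a' : A) (g₁ : G₁) (g₂ : G₂) : ℝ :=
  (if a' = a then (1 : ℝ) else 0) * (pG1 p g₁ * pG2 p g₂ / pAG1G2 p a g₁ g₂) *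
      ((y : ℝ) - m3 p a g₁ g₂)
    + (∑ g₂' : G₂, pG2 p g₂' * m3 p a g₁ g₂')
    + (∑ g₁' : G₁, pG1 p g₁' * m3 p a g₁' g₂)
    - 2 * T3 p a

/-- Conditional independence `G₂ ⊥ (A, G₁) | B₂` under `p`. -/
def CI_G2_AG1_B2 (p : Y × A × G₁ × G₂ × B₂ → ℝ) : Prop :=
  ∀ (g₂ : G₂) (a : A) (g₁ : G₁) (b₂ : B₂),
    (∑ y : Y, p (y, a, g₁, g₂, b₂)) / pB2 p b₂ =
      (pG2B2 p g₂ b₂ / pB2 p b₂) * (pAG1B2 p a g₁ b₂ / pB2 p b₂)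

/-- Conditional independence `Y ⊥ B₂ | (A, G₁, G₂)` under `p`. -/
def CI_Y_B2_AG1G2 (p : Y × A × G₁ × G₂ × B₂ → ℝ) : Prop :=
  ∀ (y : Y) (a : A) (g₁ : G₁) (g₂ : G₂) (b₂ : B₂),
    p (y, a, g₁, g₂, b₂) / pAG1G2 p a g₁ g₂ =
      ((∑ b₂' : B₂, p (y, a, g₁, g₂, b₂')) / pAG1G2 p a g₁ g₂) *
        (pAG1G2B2 p a g₁ g₂ b₂ / pAG1G2 p a g₁ g₂)

/-- Variance of a real function of the observation under `p`. -/
def VarP (p : Y × A × G₁ × G₂ × B₂ → ℝ) (f : Y × A × G₁ × G₂ × B₂ → ℝ) : ℝ :=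
  (∑ o : Y × A × G₁ × G₂ × B₂, p o * f o ^ 2) -
    (∑ o : Y × A × G₁ × G₂ × B₂, p o * f o) ^ 2


/-! ### Auxiliary definitions and lemmas for the orthogonality proof -/

lemma sum_rot3' {α β γ : Type} [Fintype α] [Fintype β] [Fintype γ] (f : α → β → γ → ℝ) :
    ∑ x, ∑ y, ∑ z, f x y z = ∑ y, ∑ z, ∑ x, f x y z := by
  calc ∑ x, ∑ y, ∑ z, f x y z = ∑ y, ∑ x, ∑ z, f x y z := Finset.sum_comm
    _ = ∑ y, ∑ z, ∑ x, f x y z := Finset.sum_congr rfl fun _ _ => Finset.sum_comm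

lemma sum_rot4' {α β γ δ : Type} [Fintype α] [Fintype β] [Fintype γ] [Fintype δ]
    (f : α → β → γ → δ → ℝ) :
    ∑ x, ∑ y, ∑ z, ∑ w, f x y z w = ∑ y, ∑ z, ∑ w, ∑ x, f x y z w := by
  calc ∑ x, ∑ y, ∑ z, ∑ w, f x y z w
      = ∑ y, ∑ x, ∑ z, ∑ w, f x y z w := Finset.sum_comm
    _ = ∑ y, ∑ z, ∑ x, ∑ w, f x y z w := Finset.sum_congr rfl fun _ _ => Finset.sum_comm
    _ = ∑ y, ∑ z, ∑ w, ∑ x, f x y z w :=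
        Finset.sum_congr rfl fun _ _ => Finset.sum_congr rfl fun _ _ => Finset.sum_comm

lemma sum_rot5' {α β γ δ ε : Type} [Fintype α] [Fintype β] [Fintype γ] [Fintype δ] [Fintype ε]
    (f : α → β → γ → δ → ε → ℝ) :
    ∑ x, ∑ y, ∑ z, ∑ w, ∑ v, f x y z w v = ∑ y, ∑ z, ∑ w, ∑ v, ∑ x, f x y z w v := by
  calc ∑ x, ∑ y, ∑ z, ∑ w, ∑ v, f x y z w v
      = ∑ y, ∑ x, ∑ z, ∑ w, ∑ v, f x y z w v := Finset.sum_comm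
    _ = ∑ y, ∑ z, ∑ x, ∑ w, ∑ v, f x y z w v := Finset.sum_congr rfl fun _ _ => Finset.sum_comm
    _ = ∑ y, ∑ z, ∑ w, ∑ x, ∑ v, f x y z w v :=
        Finset.sum_congr rfl fun _ _ => Finset.sum_congr rfl fun _ _ => Finset.sum_comm
    _ = ∑ y, ∑ z, ∑ w, ∑ v, ∑ x, f x y z w v :=
        Finset.sum_congr rfl fun _ _ => Finset.sum_congr rfl fun _ _ =>
          Finset.sum_congr rfl fun _ _ => Finset.sum_comm

/-- `∑ g₁, pG1(m₂ − m₁)`. -/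
def dDel (p : Y × A × G₁ × G₂ × B₂ → ℝ) (a : A) (g₂ : G₂) (b₂ : B₂) : ℝ :=
  ∑ g₁ : G₁, pG1 p g₁ * (m2 p a g₁ g₂ b₂ - m1 p a g₁ b₂)

/-- The `g₁`-part of `ψ₂`'s augmentation. -/
def Cf (p : Y × A × G₁ × G₂ × B₂ → ℝ) (a : A) (g₁ : G₁) : ℝ :=
  ∑ g₂' : G₂, ∑ b₂' : B₂, pG2B2 p g₂' b₂' * m2 p a g₁ g₂' b₂'

/-- The `(g₂,b₂)`-part of `ψ₂`'s augmentation. -/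
def Df (p : Y × A × G₁ × G₂ × B₂ → ℝ) (a : A) (g₂ : G₂) (b₂ : B₂) : ℝ :=
  ∑ g₁' : G₁, pG1 p g₁' * m2 p a g₁' g₂ b₂

/-- `ψ₁ − ψ₂` (depends only on `(a', g₁, g₂, b₂)`). -/
def Ffun (p : Y × A × G₁ × G₂ × B₂ → ℝ) (a a' : A) (g₁ : G₁) (g₂ : G₂) (b₂ : B₂) : ℝ :=
  (if a' = a then (1 : ℝ) else 0) *
      (pG1 p g₁ * pG2B2 p g₂ b₂ / pAG1G2B2 p a g₁ g₂ b₂) *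
      (m2 p a g₁ g₂ b₂ - m1 p a g₁ b₂)
    - dDel p a g₂ b₂

/-- The `(y,a')`-integrated version of `ψ₁ − ψ₂`. -/
def Efun (p : Y × A × G₁ × G₂ × B₂ → ℝ) (a : A) (g₁ : G₁) (g₂ : G₂) (b₂ : B₂) : ℝ :=
  pG1 p g₁ * pG2B2 p g₂ b₂ * (m2 p a g₁ g₂ b₂ - m1 p a g₁ b₂)
    - (∑ a' : A, pAG1G2B2 p a' g₁ g₂ b₂) * dDel p a g₂ b₂

set_option linter.unusedSectionVars false in
lemma my_marg_g2 (p : Y × A × G₁ × G₂ × B₂ → ℝ) (b₂ : B₂) :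
    ∑ g₂ : G₂, pG2B2 p g₂ b₂ = pB2 p b₂ := by
  simp only [pG2B2, pB2]
  exact sum_rot4' (fun g₂ y a g₁ => p (y, a, g₁, g₂, b₂))

set_option linter.unusedSectionVars false in
lemma my_marg_g1 (p : Y × A × G₁ × G₂ × B₂ → ℝ) (b₂ : B₂) :
    ∑ g₁ : G₁, ∑ a' : A, pAG1B2 p a' g₁ b₂ = pB2 p b₂ := by
  simp only [pAG1B2, pB2]
  calc ∑ g₁ : G₁, ∑ a' : A, ∑ y : Y, ∑ g₂ : G₂, p (y, a', g₁, g₂, b₂)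
      = ∑ a' : A, ∑ y : Y, ∑ g₁ : G₁, ∑ g₂ : G₂, p (y, a', g₁, g₂, b₂) :=
        sum_rot3' (fun g₁ a' y => ∑ g₂ : G₂, p (y, a', g₁, g₂, b₂))
    _ = ∑ y : Y, ∑ a' : A, ∑ g₁ : G₁, ∑ g₂ : G₂, p (y, a', g₁, g₂, b₂) := Finset.sum_comm


/-- Key orthogonality in the proof of Lemma 4.1: under
`G₂ ⊥ (A, G₁) | B₂`, the influence function for the larger adjustment
set is orthogonal to the difference of the two influence functions. -/
theorem psi_orthogonality
    (p : Y × A × G₁ × G₂ × B₂ → ℝ)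
    (hpos : ∀ o, 0 < p o) (hsum : ∑ o, p o = 1) (a : A)
    (hCI : CI_G2_AG1_B2 p) :
    ∑ y : Y, ∑ a' : A, ∑ g₁ : G₁, ∑ g₂ : G₂, ∑ b₂ : B₂,
      p (y, a', g₁, g₂, b₂) * psi2 p a y a' g₁ g₂ b₂ *
        (psi1 p a y a' g₁ b₂ - psi2 p a y a' g₁ g₂ b₂) = 0 := by
  -- nonemptiness
  haveI hne : Nonempty (Y × A × G₁ × G₂ × B₂) := by
    by_contra h
    rw [not_nonempty_iff] at h
    rw [Finset.univ_eq_empty, Finset.sum_empty] at hsum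
    exact one_ne_zero hsum.symm
  obtain ⟨⟨y0, a0, g10, g20, b20⟩⟩ := hne
  haveI : Nonempty Y := ⟨y0⟩
  haveI : Nonempty A := ⟨a0⟩
  haveI : Nonempty G₁ := ⟨g10⟩
  haveI : Nonempty G₂ := ⟨g20⟩
  haveI : Nonempty B₂ := ⟨b20⟩
  -- positivity
  have hpB2 : ∀ b₂, 0 < pB2 p b₂ := fun b₂ => by
    refine Finset.sum_pos (fun _ _ => ?_) Finset.univ_nonempty
    refine Finset.sum_pos (fun _ _ => ?_) Finset.univ_nonempty
    refine Finset.sum_pos (fun _ _ => ?_) Finset.univ_nonempty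
    exact Finset.sum_pos (fun _ _ => hpos _) Finset.univ_nonempty
  have hpAG1B2 : ∀ a' g₁ b₂, 0 < pAG1B2 p a' g₁ b₂ := fun a' g₁ b₂ => by
    refine Finset.sum_pos (fun _ _ => ?_) Finset.univ_nonempty
    exact Finset.sum_pos (fun _ _ => hpos _) Finset.univ_nonempty
  have hpAG1G2B2 : ∀ a' g₁ g₂ b₂, 0 < pAG1G2B2 p a' g₁ g₂ b₂ := fun a' g₁ g₂ b₂ =>
    Finset.sum_pos (fun _ _ => hpos _) Finset.univ_nonempty
  -- the factorization from conditional independence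
  have hfac : ∀ a' g₁ g₂ b₂,
      pAG1G2B2 p a' g₁ g₂ b₂ * pB2 p b₂ = pG2B2 p g₂ b₂ * pAG1B2 p a' g₁ b₂ := by
    intro a' g₁ g₂ b₂
    have h := hCI g₂ a' g₁ b₂
    have hb := (hpB2 b₂).ne'
    rw [show (∑ y : Y, p (y, a', g₁, g₂, b₂)) = pAG1G2B2 p a' g₁ g₂ b₂ from rfl] at h
    rw [div_mul_div_comm, div_eq_div_iff hb (mul_ne_zero hb hb)] at h
    apply mul_right_cancel₀ hb
    linear_combination h
  -- projection of m₂ onto m₁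
  have hm : ∀ g₁ b₂, ∑ g₂ : G₂, pG2B2 p g₂ b₂ * m2 p a g₁ g₂ b₂
      = pB2 p b₂ * m1 p a g₁ b₂ := by
    intro g₁ b₂
    have key : ∀ g₂ : G₂, pG2B2 p g₂ b₂ * m2 p a g₁ g₂ b₂
        = ∑ y : Y, (y : ℝ) * p (y, a, g₁, g₂, b₂) * (pB2 p b₂ / pAG1B2 p a g₁ b₂) := by
      intro g₂
      rw [m2, Finset.mul_sum]
      refine Finset.sum_congr rfl fun y _ => ?_
      have h1 := (hpAG1G2B2 a g₁ g₂ b₂).ne'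
      have h2 := (hpAG1B2 a g₁ b₂).ne'
      field_simp
      linear_combination (-(y : ℝ)) * p (y, a, g₁, g₂, b₂) * hfac a g₁ g₂ b₂
    calc ∑ g₂ : G₂, pG2B2 p g₂ b₂ * m2 p a g₁ g₂ b₂
        = ∑ g₂ : G₂, ∑ y : Y, (y : ℝ) * p (y, a, g₁, g₂, b₂) * (pB2 p b₂ / pAG1B2 p a g₁ b₂) :=
          Finset.sum_congr rfl fun g₂ _ => key g₂
      _ = ∑ y : Y, ∑ g₂ : G₂, (y : ℝ) * p (y, a, g₁, g₂, b₂) * (pB2 p b₂ / pAG1B2 p a g₁ b₂) :=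
          Finset.sum_comm
      _ = pB2 p b₂ * m1 p a g₁ b₂ := by
          rw [m1, Finset.mul_sum]
          refine Finset.sum_congr rfl fun y _ => ?_
          rw [← Finset.sum_mul, ← Finset.mul_sum]
          ring
  -- residual has conditional mean zero
  have hres : ∀ g₁ g₂ b₂,
      ∑ y : Y, p (y, a, g₁, g₂, b₂) * ((y : ℝ) - m2 p a g₁ g₂ b₂) = 0 := by
    intro g₁ g₂ b₂
    have hm2 : m2 p a g₁ g₂ b₂ * pAG1G2B2 p a g₁ g₂ b₂
        = ∑ y : Y, (y : ℝ) * p (y, a, g₁, g₂, b₂) := by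
      rw [m2, Finset.sum_mul]
      refine Finset.sum_congr rfl fun y _ => ?_
      have h1 := (hpAG1G2B2 a g₁ g₂ b₂).ne'
      field_simp
    calc ∑ y : Y, p (y, a, g₁, g₂, b₂) * ((y : ℝ) - m2 p a g₁ g₂ b₂)
        = (∑ y : Y, (y : ℝ) * p (y, a, g₁, g₂, b₂))
            - (∑ y : Y, p (y, a, g₁, g₂, b₂)) * m2 p a g₁ g₂ b₂ := by
          rw [Finset.sum_mul, ← Finset.sum_sub_distrib]
          exact Finset.sum_congr rfl fun y _ => by ring
      _ = 0 := by
          rw [show (∑ y : Y, p (y, a, g₁, g₂, b₂)) = pAG1G2B2 p a g₁ g₂ b₂ from rfl, ← hm2]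
          ring
  have hres2 : ∀ (a' : A) (g₁ : G₁) (g₂ : G₂) (b₂ : B₂),
      (if a' = a then (1 : ℝ) else 0) *
        ∑ y : Y, p (y, a', g₁, g₂, b₂) * ((y : ℝ) - m2 p a g₁ g₂ b₂) = 0 := by
    intro a' g₁ g₂ b₂
    rcases eq_or_ne a' a with rfl | h
    · rw [if_pos rfl, hres g₁ g₂ b₂, mul_zero]
    · rw [if_neg h, zero_mul]
  -- equality of the two weights
  have hw : ∀ g₁ g₂ b₂, pG1 p g₁ * pB2 p b₂ / pAG1B2 p a g₁ b₂
      = pG1 p g₁ * pG2B2 p g₂ b₂ / pAG1G2B2 p a g₁ g₂ b₂ := by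
    intro g₁ g₂ b₂
    rw [div_eq_div_iff (hpAG1B2 a g₁ b₂).ne' (hpAG1G2B2 a g₁ g₂ b₂).ne']
    linear_combination pG1 p g₁ * hfac a g₁ g₂ b₂
  -- the two `g₁`-augmentations agree
  have hc : ∀ g₁ : G₁, (∑ b₂' : B₂, pB2 p b₂' * m1 p a g₁ b₂')
      = ∑ g₂' : G₂, ∑ b₂' : B₂, pG2B2 p g₂' b₂' * m2 p a g₁ g₂' b₂' := by
    intro g₁
    rw [Finset.sum_comm]
    exact Finset.sum_congr rfl fun b₂' _ => (hm g₁ b₂').symm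
  have hT : T1 p a = T2 p a := by
    simp only [T1, T2]
    exact Finset.sum_congr rfl fun g₁ _ => by rw [hc g₁]
  have hdd : ∀ g₂ b₂, dDel p a g₂ b₂
      = (∑ g₁' : G₁, pG1 p g₁' * m2 p a g₁' g₂ b₂)
        - ∑ g₁' : G₁, pG1 p g₁' * m1 p a g₁' b₂ := by
    intro g₂ b₂
    simp only [dDel]
    rw [← Finset.sum_sub_distrib]
    exact Finset.sum_congr rfl fun g₁' _ => by ring
  -- ψ₁ − ψ₂ does not depend on y
  have hdiff : ∀ (y : Y) (a' : A) (g₁ : G₁) (g₂ : G₂) (b₂ : B₂),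
      psi1 p a y a' g₁ b₂ - psi2 p a y a' g₁ g₂ b₂ = Ffun p a a' g₁ g₂ b₂ := by
    intro y a' g₁ g₂ b₂
    simp only [psi1, psi2, Ffun]
    rw [hw g₁ g₂ b₂, hc g₁, hT, hdd g₂ b₂]
    ring
  -- zero-mean facts for Efun
  have hZ : ∀ g₁ b₂,
      ∑ g₂ : G₂, pG2B2 p g₂ b₂ * (m2 p a g₁ g₂ b₂ - m1 p a g₁ b₂) = 0 := by
    intro g₁ b₂
    calc ∑ g₂ : G₂, pG2B2 p g₂ b₂ * (m2 p a g₁ g₂ b₂ - m1 p a g₁ b₂)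
        = (∑ g₂ : G₂, pG2B2 p g₂ b₂ * m2 p a g₁ g₂ b₂)
            - (∑ g₂ : G₂, pG2B2 p g₂ b₂) * m1 p a g₁ b₂ := by
          rw [Finset.sum_mul, ← Finset.sum_sub_distrib]
          exact Finset.sum_congr rfl fun g₂ _ => by ring
      _ = 0 := by rw [hm g₁ b₂, my_marg_g2]; ring
  have hZd : ∀ b₂, ∑ g₂ : G₂, pG2B2 p g₂ b₂ * dDel p a g₂ b₂ = 0 := by
    intro b₂
    calc ∑ g₂ : G₂, pG2B2 p g₂ b₂ * dDel p a g₂ b₂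
        = ∑ g₂ : G₂, ∑ g₁ : G₁,
            pG1 p g₁ * (pG2B2 p g₂ b₂ * (m2 p a g₁ g₂ b₂ - m1 p a g₁ b₂)) := by
          refine Finset.sum_congr rfl fun g₂ _ => ?_
          simp only [dDel]
          rw [Finset.mul_sum]
          exact Finset.sum_congr rfl fun g₁ _ => by ring
      _ = ∑ g₁ : G₁, ∑ g₂ : G₂,
            pG1 p g₁ * (pG2B2 p g₂ b₂ * (m2 p a g₁ g₂ b₂ - m1 p a g₁ b₂)) := Finset.sum_comm
      _ = 0 := by
          refine Finset.sum_eq_zero fun g₁ _ => ?_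
          rw [← Finset.mul_sum, hZ g₁ b₂, mul_zero]
  have hqd : ∀ g₁ b₂,
      ∑ g₂ : G₂, (∑ a' : A, pAG1G2B2 p a' g₁ g₂ b₂) * dDel p a g₂ b₂ = 0 := by
    intro g₁ b₂
    have h1 : (∑ g₂ : G₂, (∑ a' : A, pAG1G2B2 p a' g₁ g₂ b₂) * dDel p a g₂ b₂) * pB2 p b₂
        = (∑ a' : A, pAG1B2 p a' g₁ b₂) * ∑ g₂ : G₂, pG2B2 p g₂ b₂ * dDel p a g₂ b₂ := by
      rw [Finset.sum_mul, Finset.mul_sum]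
      refine Finset.sum_congr rfl fun g₂ _ => ?_
      have hq2 : (∑ a' : A, pAG1G2B2 p a' g₁ g₂ b₂) * pB2 p b₂
          = pG2B2 p g₂ b₂ * ∑ a' : A, pAG1B2 p a' g₁ b₂ := by
        rw [Finset.sum_mul, Finset.mul_sum]
        exact Finset.sum_congr rfl fun a' _ => hfac a' g₁ g₂ b₂
      calc (∑ a' : A, pAG1G2B2 p a' g₁ g₂ b₂) * dDel p a g₂ b₂ * pB2 p b₂
          = (∑ a' : A, pAG1G2B2 p a' g₁ g₂ b₂) * pB2 p b₂ * dDel p a g₂ b₂ := by ring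
        _ = (∑ a' : A, pAG1B2 p a' g₁ b₂) * (pG2B2 p g₂ b₂ * dDel p a g₂ b₂) := by
            rw [hq2]; ring
    rw [hZd b₂, mul_zero] at h1
    rcases mul_eq_zero.mp h1 with h | h
    · exact h
    · exact absurd h (hpB2 b₂).ne'
  have hqsum : ∀ g₂ b₂, ∑ g₁ : G₁, (∑ a' : A, pAG1G2B2 p a' g₁ g₂ b₂) = pG2B2 p g₂ b₂ := by
    intro g₂ b₂
    have h1 : (∑ g₁ : G₁, ∑ a' : A, pAG1G2B2 p a' g₁ g₂ b₂) * pB2 p b₂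
        = pG2B2 p g₂ b₂ * pB2 p b₂ := by
      rw [Finset.sum_mul]
      calc ∑ g₁ : G₁, (∑ a' : A, pAG1G2B2 p a' g₁ g₂ b₂) * pB2 p b₂
          = ∑ g₁ : G₁, ∑ a' : A, pG2B2 p g₂ b₂ * pAG1B2 p a' g₁ b₂ := by
            refine Finset.sum_congr rfl fun g₁ _ => ?_
            rw [Finset.sum_mul]
            exact Finset.sum_congr rfl fun a' _ => hfac a' g₁ g₂ b₂
        _ = pG2B2 p g₂ b₂ * ∑ g₁ : G₁, ∑ a' : A, pAG1B2 p a' g₁ b₂ := by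
            rw [Finset.mul_sum]
            exact Finset.sum_congr rfl fun g₁ _ => by rw [Finset.mul_sum]
        _ = pG2B2 p g₂ b₂ * pB2 p b₂ := by rw [my_marg_g1]
    exact mul_right_cancel₀ (hpB2 b₂).ne' h1
  -- Efun has zero marginals
  have hEg2 : ∀ g₁ b₂, ∑ g₂ : G₂, Efun p a g₁ g₂ b₂ = 0 := by
    intro g₁ b₂
    simp only [Efun]
    rw [Finset.sum_sub_distrib, hqd g₁ b₂, sub_zero]
    calc ∑ g₂ : G₂, pG1 p g₁ * pG2B2 p g₂ b₂ * (m2 p a g₁ g₂ b₂ - m1 p a g₁ b₂)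
        = pG1 p g₁ * ∑ g₂ : G₂, pG2B2 p g₂ b₂ * (m2 p a g₁ g₂ b₂ - m1 p a g₁ b₂) := by
          rw [Finset.mul_sum]
          exact Finset.sum_congr rfl fun g₂ _ => by ring
      _ = 0 := by rw [hZ g₁ b₂, mul_zero]
  have hEg1 : ∀ g₂ b₂, ∑ g₁ : G₁, Efun p a g₁ g₂ b₂ = 0 := by
    intro g₂ b₂
    simp only [Efun]
    rw [Finset.sum_sub_distrib, ← Finset.sum_mul, hqsum g₂ b₂, sub_eq_zero]
    simp only [dDel]
    rw [Finset.mul_sum]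
    exact Finset.sum_congr rfl fun g₁ _ => by ring
  -- integrate out y
  have key1 : ∀ (a' : A) (g₁ : G₁) (g₂ : G₂) (b₂ : B₂),
      ∑ y : Y, p (y, a', g₁, g₂, b₂) * psi2 p a y a' g₁ g₂ b₂ *
          (psi1 p a y a' g₁ b₂ - psi2 p a y a' g₁ g₂ b₂)
      = pAG1G2B2 p a' g₁ g₂ b₂ * (Cf p a g₁ + Df p a g₂ b₂ - 2 * T2 p a) *
          Ffun p a a' g₁ g₂ b₂ := by
    intro a' g₁ g₂ b₂
    calc ∑ y : Y, p (y, a', g₁, g₂, b₂) * psi2 p a y a' g₁ g₂ b₂ *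
            (psi1 p a y a' g₁ b₂ - psi2 p a y a' g₁ g₂ b₂)
        = ∑ y : Y,
            ((if a' = a then (1 : ℝ) else 0) *
                (p (y, a', g₁, g₂, b₂) * ((y : ℝ) - m2 p a g₁ g₂ b₂)) *
                ((pG1 p g₁ * pG2B2 p g₂ b₂ / pAG1G2B2 p a g₁ g₂ b₂) *
                  Ffun p a a' g₁ g₂ b₂)
              + ((Cf p a g₁ + Df p a g₂ b₂ - 2 * T2 p a) * Ffun p a a' g₁ g₂ b₂) *
                  p (y, a', g₁, g₂, b₂)) := by
          refine Finset.sum_congr rfl fun y _ => ?_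
          rw [hdiff y a' g₁ g₂ b₂]
          simp only [psi2, Cf, Df, Ffun]
          ring
      _ = ((if a' = a then (1 : ℝ) else 0) *
              ∑ y : Y, p (y, a', g₁, g₂, b₂) * ((y : ℝ) - m2 p a g₁ g₂ b₂)) *
              ((pG1 p g₁ * pG2B2 p g₂ b₂ / pAG1G2B2 p a g₁ g₂ b₂) * Ffun p a a' g₁ g₂ b₂)
            + ((Cf p a g₁ + Df p a g₂ b₂ - 2 * T2 p a) * Ffun p a a' g₁ g₂ b₂) *
                ∑ y : Y, p (y, a', g₁, g₂, b₂) := by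
          rw [Finset.sum_add_distrib, ← Finset.sum_mul, ← Finset.mul_sum, ← Finset.mul_sum]
      _ = pAG1G2B2 p a' g₁ g₂ b₂ * (Cf p a g₁ + Df p a g₂ b₂ - 2 * T2 p a) *
            Ffun p a a' g₁ g₂ b₂ := by
          rw [hres2 a' g₁ g₂ b₂, zero_mul, zero_add,
            show (∑ y : Y, p (y, a', g₁, g₂, b₂)) = pAG1G2B2 p a' g₁ g₂ b₂ from rfl]
          ring
  -- integrate out a'
  have key2 : ∀ (g₁ : G₁) (g₂ : G₂) (b₂ : B₂),
      ∑ a' : A, pAG1G2B2 p a' g₁ g₂ b₂ * (Cf p a g₁ + Df p a g₂ b₂ - 2 * T2 p a) *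
          Ffun p a a' g₁ g₂ b₂
      = (Cf p a g₁ + Df p a g₂ b₂ - 2 * T2 p a) * Efun p a g₁ g₂ b₂ := by
    intro g₁ g₂ b₂
    have hA := (hpAG1G2B2 a g₁ g₂ b₂).ne'
    calc ∑ a' : A, pAG1G2B2 p a' g₁ g₂ b₂ * (Cf p a g₁ + Df p a g₂ b₂ - 2 * T2 p a) *
            Ffun p a a' g₁ g₂ b₂
        = ∑ a' : A,
            (((if a' = a then (1 : ℝ) else 0) * pAG1G2B2 p a' g₁ g₂ b₂) *
                ((Cf p a g₁ + Df p a g₂ b₂ - 2 * T2 p a) *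
                  ((pG1 p g₁ * pG2B2 p g₂ b₂ / pAG1G2B2 p a g₁ g₂ b₂) *
                    (m2 p a g₁ g₂ b₂ - m1 p a g₁ b₂)))
              - pAG1G2B2 p a' g₁ g₂ b₂ *
                  ((Cf p a g₁ + Df p a g₂ b₂ - 2 * T2 p a) * dDel p a g₂ b₂)) := by
          refine Finset.sum_congr rfl fun a' _ => ?_
          simp only [Ffun]
          ring
      _ = (∑ a' : A, (if a' = a then (1 : ℝ) else 0) * pAG1G2B2 p a' g₁ g₂ b₂) *
              ((Cf p a g₁ + Df p a g₂ b₂ - 2 * T2 p a) *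
                ((pG1 p g₁ * pG2B2 p g₂ b₂ / pAG1G2B2 p a g₁ g₂ b₂) *
                  (m2 p a g₁ g₂ b₂ - m1 p a g₁ b₂)))
            - (∑ a' : A, pAG1G2B2 p a' g₁ g₂ b₂) *
                ((Cf p a g₁ + Df p a g₂ b₂ - 2 * T2 p a) * dDel p a g₂ b₂) := by
          rw [Finset.sum_sub_distrib, ← Finset.sum_mul, ← Finset.sum_mul]
      _ = (Cf p a g₁ + Df p a g₂ b₂ - 2 * T2 p a) * Efun p a g₁ g₂ b₂ := by
          rw [show (∑ a' : A, (if a' = a then (1 : ℝ) else 0) * pAG1G2B2 p a' g₁ g₂ b₂)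
              = pAG1G2B2 p a g₁ g₂ b₂ from by simp]
          simp only [Efun]
          field_simp
  -- final cancellation
  have final : ∑ g₁ : G₁, ∑ g₂ : G₂, ∑ b₂ : B₂,
      (Cf p a g₁ + Df p a g₂ b₂ - 2 * T2 p a) * Efun p a g₁ g₂ b₂ = 0 := by
    have split : ∀ (g₁ : G₁) (g₂ : G₂) (b₂ : B₂),
        (Cf p a g₁ + Df p a g₂ b₂ - 2 * T2 p a) * Efun p a g₁ g₂ b₂
        = (Cf p a g₁ - 2 * T2 p a) * Efun p a g₁ g₂ b₂
          + Df p a g₂ b₂ * Efun p a g₁ g₂ b₂ := fun _ _ _ => by ring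
    simp only [split, Finset.sum_add_distrib]
    have h1 : ∑ g₁ : G₁, ∑ g₂ : G₂, ∑ b₂ : B₂,
        (Cf p a g₁ - 2 * T2 p a) * Efun p a g₁ g₂ b₂ = 0 := by
      refine Finset.sum_eq_zero fun g₁ _ => ?_
      rw [Finset.sum_comm]
      refine Finset.sum_eq_zero fun b₂ _ => ?_
      rw [← Finset.mul_sum, hEg2 g₁ b₂, mul_zero]
    have h2 : ∑ g₁ : G₁, ∑ g₂ : G₂, ∑ b₂ : B₂,
        Df p a g₂ b₂ * Efun p a g₁ g₂ b₂ = 0 := by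
      rw [Finset.sum_comm]
      refine Finset.sum_eq_zero fun g₂ _ => ?_
      rw [Finset.sum_comm]
      refine Finset.sum_eq_zero fun b₂ _ => ?_
      rw [← Finset.mul_sum, hEg1 g₂ b₂, mul_zero]
    rw [h1, h2, add_zero]
  -- assemble
  calc ∑ y : Y, ∑ a' : A, ∑ g₁ : G₁, ∑ g₂ : G₂, ∑ b₂ : B₂,
        p (y, a', g₁, g₂, b₂) * psi2 p a y a' g₁ g₂ b₂ *
          (psi1 p a y a' g₁ b₂ - psi2 p a y a' g₁ g₂ b₂)
      = ∑ a' : A, ∑ g₁ : G₁, ∑ g₂ : G₂, ∑ b₂ : B₂, ∑ y : Y,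
          p (y, a', g₁, g₂, b₂) * psi2 p a y a' g₁ g₂ b₂ *
            (psi1 p a y a' g₁ b₂ - psi2 p a y a' g₁ g₂ b₂) :=
        sum_rot5' (fun y a' g₁ g₂ b₂ => p (y, a', g₁, g₂, b₂) * psi2 p a y a' g₁ g₂ b₂ *
          (psi1 p a y a' g₁ b₂ - psi2 p a y a' g₁ g₂ b₂))
    _ = ∑ a' : A, ∑ g₁ : G₁, ∑ g₂ : G₂, ∑ b₂ : B₂,
          pAG1G2B2 p a' g₁ g₂ b₂ * (Cf p a g₁ + Df p a g₂ b₂ - 2 * T2 p a) *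
            Ffun p a a' g₁ g₂ b₂ :=
        Finset.sum_congr rfl fun a' _ => Finset.sum_congr rfl fun g₁ _ =>
          Finset.sum_congr rfl fun g₂ _ => Finset.sum_congr rfl fun b₂ _ =>
            key1 a' g₁ g₂ b₂
    _ = ∑ g₁ : G₁, ∑ g₂ : G₂, ∑ b₂ : B₂, ∑ a' : A,
          pAG1G2B2 p a' g₁ g₂ b₂ * (Cf p a g₁ + Df p a g₂ b₂ - 2 * T2 p a) *
            Ffun p a a' g₁ g₂ b₂ :=
        sum_rot4' (fun a' g₁ g₂ b₂ => pAG1G2B2 p a' g₁ g₂ b₂ *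
          (Cf p a g₁ + Df p a g₂ b₂ - 2 * T2 p a) * Ffun p a a' g₁ g₂ b₂)
    _ = ∑ g₁ : G₁, ∑ g₂ : G₂, ∑ b₂ : B₂,
          (Cf p a g₁ + Df p a g₂ b₂ - 2 * T2 p a) * Efun p a g₁ g₂ b₂ :=
        Finset.sum_congr rfl fun g₁ _ => Finset.sum_congr rfl fun g₂ _ =>
          Finset.sum_congr rfl fun b₂ _ => key2 g₁ g₂ b₂
    _ = 0 := final


end
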